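/- Let n ∈ ℕ and let x ∈ ℝ with x > 1, x not an integer, and ⌊x⌋ + n odd. With α = x − ⌊x⌋, one has ((1−α)/(2−α))·D_n(x−1) + (1/(2−α))·D_n(⌊x⌋+1) − (1/2)·D_n(x−1) − (1/2)·D_n(x+1) ≥ 0. -/

import Mathlib

open Classical in
/-- The recursively defined functions `D n : ℝ → ℝ`. -/
noncomputable def D : ℕ → ℝ → ℝ
  | 0, x => if x ≤ 0 then 1 else 0
  | n + 1, x =>
    if x ≤ 0 then 1
    else if ((n : ℝ) + 1) < x then 0
    else if ∃ m : ℤ, x = (m : ℝ) then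
      (1 / 2) * D n (x - 1) + (1 / 2) * D n (x + 1)
    else if Odd n ∧ x < 1 then
      (1 - x) * D n 0 + x * D n 1
    else if Even (⌊x⌋ + (n : ℤ)) then
      (1 / (1 + Int.fract x)) * D n (⌊x⌋ : ℝ)
        + (Int.fract x / (1 + Int.fract x)) * D n (x + 1)
    else
      ((1 - Int.fract x) / (2 - Int.fract x)) * D n (x - 1)
        + (1 / (2 - Int.fract x)) * D n (⌈x⌉ : ℝ)

lemma D_nonpos (n : ℕ) (x : ℝ) (h : x ≤ 0) : D n x = 1 := by
  cases n with
  | zero => rw [D, if_pos h]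
  | succ k => rw [D, if_pos h]

lemma D_gt (n : ℕ) (x : ℝ) (h : (n : ℝ) < x) : D n x = 0 := by
  cases n with
  | zero =>
    rw [D, if_neg]
    push_cast at h; linarith
  | succ k =>
    have h0 : ¬ x ≤ 0 := by
      push_cast at h
      have : (0:ℝ) ≤ (k:ℝ) := Nat.cast_nonneg k
      linarith
    have h1 : ((k:ℝ) + 1) < x := by push_cast at h; linarith
    rw [D, if_neg h0, if_pos h1]

lemma D_nonneg (n : ℕ) : ∀ x : ℝ, 0 ≤ D n x := by
  induction n with
  | zero => intro x; rw [D]; split_ifs <;> norm_num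
  | succ k ih =>
    intro x
    have hf0 := Int.fract_nonneg x
    have hf1 := Int.fract_lt_one x
    rw [D]
    split_ifs with h1 h2 h3 h4 h5
    · norm_num
    · norm_num
    · linarith [ih (x-1), ih (x+1)]
    · have hx0 : (0:ℝ) < x := not_le.mp h1
      have := h4.2
      have := ih 0; have := ih 1
      nlinarith
    · have := ih ((⌊x⌋:ℝ)); have := ih (x+1)
      have c1 : (0:ℝ) ≤ 1 / (1 + Int.fract x) := by positivity
      have c2 : (0:ℝ) ≤ Int.fract x / (1 + Int.fract x) := by positivity
      nlinarith
    · have := ih (x-1); have := ih ((⌈x⌉:ℝ))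
      have c1 : (0:ℝ) ≤ (1 - Int.fract x) / (2 - Int.fract x) := by
        apply div_nonneg <;> linarith
      have c2 : (0:ℝ) ≤ 1 / (2 - Int.fract x) := by
        apply div_nonneg <;> linarith
      nlinarith

lemma noninteger_fract_pos {y : ℝ} (h : ¬∃ m : ℤ, y = (m:ℝ)) : 0 < Int.fract y :=
  Int.fract_pos.mpr (fun he => h ⟨⌊y⌋, he⟩)

lemma noninteger_ceil {y : ℝ} (h : ¬∃ m : ℤ, y = (m:ℝ)) : ⌈y⌉ = ⌊y⌋ + 1 := by
  have hne : y ≠ (⌊y⌋:ℝ) := fun he => h ⟨⌊y⌋, he⟩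
  have h1 : (⌊y⌋:ℝ) < y := lt_of_le_of_ne (Int.floor_le y) (Ne.symm hne)
  have h2 : ⌊y⌋ < ⌈y⌉ := Int.lt_ceil.mpr h1
  have h3 : ⌈y⌉ ≤ ⌊y⌋ + 1 := Int.ceil_le_floor_add_one y
  omega

lemma noninteger_add_one {y : ℝ} (h : ¬∃ m : ℤ, y = (m:ℝ)) : ¬∃ m : ℤ, y + 1 = (m:ℝ) := by
  rintro ⟨m, hm⟩
  exact h ⟨m - 1, by push_cast; linarith⟩

lemma noninteger_sub_one {y : ℝ} (h : ¬∃ m : ℤ, y = (m:ℝ)) : ¬∃ m : ℤ, y - 1 = (m:ℝ) := by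
  rintro ⟨m, hm⟩
  exact h ⟨m + 1, by push_cast; linarith⟩

/-- Integer evaluation. -/
lemma D_int (k : ℕ) (m : ℤ) (h0 : 0 < m) (h1 : (m:ℝ) ≤ (k:ℝ) + 1) :
    D (k+1) (m:ℝ) = 1/2 * D k ((m:ℝ) - 1) + 1/2 * D k ((m:ℝ) + 1) := by
  have hm0 : ¬ (m:ℝ) ≤ 0 := by
    push_neg; exact_mod_cast h0
  have hm1 : ¬ ((k:ℝ) + 1) < (m:ℝ) := not_lt.mpr h1
  rw [D, if_neg hm0, if_neg hm1, if_pos ⟨m, rfl⟩]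

/-- Last-branch evaluation. -/
lemma D_odd_branch (k : ℕ) (y : ℝ) (h1 : 1 < y) (h2 : y ≤ (k:ℝ) + 1)
    (hni : ¬∃ m : ℤ, y = (m:ℝ)) (hpar : ¬ Even (⌊y⌋ + (k:ℤ))) :
    D (k+1) y = ((1 - Int.fract y) / (2 - Int.fract y)) * D k (y - 1)
      + (1 / (2 - Int.fract y)) * D k ((⌊y⌋:ℝ) + 1) := by
  have h0 : ¬ y ≤ 0 := by linarith
  have hl : ¬ ((k:ℝ) + 1) < y := not_lt.mpr h2
  have h4 : ¬ (Odd k ∧ y < 1) := fun hc => absurd hc.2 (not_lt.mpr h1.le)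
  rw [D, if_neg h0, if_neg hl, if_neg hni, if_neg h4, if_neg hpar,
    noninteger_ceil hni]
  push_cast
  ring

/-- Linear-branch evaluation on (0,1). -/
lemma D_lin_branch (k : ℕ) (y : ℝ) (h0 : 0 < y) (h1 : y < 1) (hk : Odd k) :
    D (k+1) y = (1 - y) * D k 0 + y * D k 1 := by
  have hy0 : ¬ y ≤ 0 := not_le.mpr h0
  have hl : ¬ ((k:ℝ) + 1) < y := by
    push_neg
    have : (0:ℝ) ≤ (k:ℝ) := Nat.cast_nonneg k
    linarith
  have hni : ¬∃ m : ℤ, y = (m:ℝ) := by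
    rintro ⟨m, rfl⟩
    have a1 : 0 < m := by exact_mod_cast h0
    have a2 : m < 1 := by exact_mod_cast h1
    omega
  rw [D, if_neg hy0, if_neg hl, if_neg hni, if_pos ⟨hk, h1⟩]

lemma D_one (k : ℕ) : D (k+1) 1 = 1/2 + 1/2 * D k 2 := by
  have := D_int k 1 (by norm_num) (by push_cast; linarith [Nat.cast_nonneg (α:=ℝ) k])
  push_cast at this
  rw [show (1:ℝ) = ((1:ℤ):ℝ) by norm_num] at this
  norm_num at this ⊢
  rw [this, D_nonpos k 0 le_rfl]
  ring

/-- D is monotone in n at natural-number points. -/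
lemma D_mono (n : ℕ) : ∀ m : ℕ, D n (m:ℝ) ≤ D (n+1) (m:ℝ) := by
  induction n with
  | zero =>
    intro m
    match m with
    | 0 => simp only [Nat.cast_zero]; rw [D_nonpos 0 0 le_rfl, D_nonpos 1 0 le_rfl]
    | (m+1) =>
      rw [D_gt 0 _ (by push_cast; positivity)]
      exact D_nonneg _ _
  | succ k ih =>
    intro m
    match m with
    | 0 => simp only [Nat.cast_zero]; rw [D_nonpos _ 0 le_rfl, D_nonpos _ 0 le_rfl]
    | (m+1) =>
      by_cases hc : ((m:ℝ) + 1) ≤ (k:ℝ) + 1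
      · have e1 : D (k+1) ((m+1:ℕ):ℝ) = 1/2 * D k ((m:ℝ)) + 1/2 * D k ((m:ℝ)+2) := by
          have := D_int k ((m:ℤ)+1) (by positivity) (by push_cast; push_cast at hc; linarith)
          push_cast at this ⊢
          rw [this]; ring_nf
        have e2 : D (k+2) ((m+1:ℕ):ℝ) = 1/2 * D (k+1) ((m:ℝ)) + 1/2 * D (k+1) ((m:ℝ)+2) := by
          have := D_int (k+1) ((m:ℤ)+1) (by positivity) (by push_cast; push_cast at hc; linarith)
          push_cast at this ⊢
          rw [this]; ring_nf
        rw [e1, e2]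
        have i1 := ih m
        have i2 := ih (m+2)
        push_cast at i1 i2
        linarith
      · rw [D_gt (k+1) _ (by push_cast; push_cast at hc; linarith)]
        exact D_nonneg _ _

lemma D_two_val : D 2 (2:ℝ) = 1/4 := by
  have h := D_int 1 2 (by norm_num) (by norm_num)
  push_cast at h
  norm_num at h
  rw [h, D_one 0, D_gt 1 3 (by norm_num), D_gt 0 2 (by norm_num)]
  norm_num

lemma Zlem (k : ℕ) : ∀ β : ℝ, 0 < β → β < 1 →
    β * D k ((k:ℝ) - 2 + β) ≤ 2 * D k (k:ℝ) := by
  induction k with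
  | zero =>
    intro β h0 h1
    simp only [Nat.cast_zero]
    rw [D_nonpos 0 ((0:ℝ)-2+β) (by linarith), D_nonpos 0 0 le_rfl]
    linarith
  | succ j ihj =>
    match j, ihj with
    | 0, _ =>
      intro β h0 h1
      push_cast
      rw [show (1:ℝ)-2+β = -1+β by ring]
      rw [D_nonpos 1 (-1+β) (by linarith), D_one 0, D_gt 0 2 (by norm_num)]
      linarith
    | 1, _ =>
      intro β h0 h1
      have hb : D 2 β = (1 - β) * D 1 0 + β * D 1 1 :=
        D_lin_branch 1 β h0 h1 ⟨0, by norm_num⟩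
      push_cast
      rw [show (2:ℝ)-2+β = β by ring]
      rw [hb, D_two_val, D_nonpos 1 0 le_rfl, D_one 0, D_gt 0 2 (by norm_num)]
      nlinarith [sq_nonneg (1 - β)]
    | (j'+2), ih =>
      intro β h0 h1
      have hA0 : (0:ℝ) ≤ (j':ℝ) := Nat.cast_nonneg j'
      have hZ := ih β h0 h1
      have hKint : D (j'+3) ((j':ℝ)+3) = 1/2 * D (j'+2) ((j':ℝ)+2) := by
        have h := D_int (j'+2) ((j':ℤ)+3) (by positivity) (by push_cast; linarith)
        push_cast at h
        rw [show (j':ℝ)+3-1 = (j':ℝ)+2 by ring, show (j':ℝ)+3+1 = (j':ℝ)+4 by ring] at h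
        rw [h, D_gt (j'+2) ((j':ℝ)+4) (by push_cast; linarith)]
        ring
      -- point x = (j'+1) + β
      have hfl : ⌊(j':ℝ)+1+β⌋ = (j'+1 : ℤ) := by
        rw [show (j':ℝ)+1+β = (((j':ℤ)+1 :ℤ):ℝ) + β by push_cast; ring,
          Int.floor_intCast_add, Int.floor_eq_zero_iff.mpr ⟨h0.le, h1⟩, add_zero]
      have hfr : Int.fract ((j':ℝ)+1+β) = β := by
        rw [show (j':ℝ)+1+β = (((j':ℤ)+1 :ℤ):ℝ) + β by push_cast; ring,
          Int.fract_intCast_add, Int.fract_eq_self.mpr ⟨h0.le, h1⟩]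
      have hni : ¬∃ m : ℤ, (j':ℝ)+1+β = (m:ℝ) := by
        rintro ⟨m, hm⟩
        have hb : β = ((m - (j'+1) : ℤ):ℝ) := by push_cast; linarith
        rw [hb] at h0 h1
        have a1 : (0:ℤ) < m - (j'+1) := by exact_mod_cast h0
        have a2 : (m - (j'+1) : ℤ) < 1 := by exact_mod_cast h1
        omega
      have hpar : ¬ Even (⌊(j':ℝ)+1+β⌋ + ((j'+2:ℕ):ℤ)) := by
        rw [hfl]
        rintro ⟨t, ht⟩
        push_cast at ht
        omega
      have hexp := D_odd_branch (j'+2) ((j':ℝ)+1+β)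
        (by linarith) (by push_cast; linarith) hni hpar
      rw [hfr, hfl] at hexp
      rw [show (j':ℝ)+1+β-1 = (j':ℝ)+2-2+β by ring,
        show (((j'+1:ℤ)):ℝ) + 1 = (j':ℝ)+2 by push_cast; ring] at hexp
      -- canonicalize the goal
      rw [show (((j'+2+1:ℕ)):ℝ) = (j':ℝ)+3 by push_cast; ring,
        show (j':ℝ)+3-2+β = (j':ℝ)+1+β by ring, hexp, hKint]
      rw [show (((j'+2:ℕ)):ℝ) = (j':ℝ)+2 by push_cast; ring] at hZ
      set U := D (j'+2) ((j':ℝ)+2-2+β)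
      set K := D (j'+2) ((j':ℝ)+2)
      have hU0 : 0 ≤ U := D_nonneg _ _
      have hK0 : 0 ≤ K := D_nonneg _ _
      have h2b : (0:ℝ) < 2 - β := by linarith
      have heq : 2 * (1/2 * K) - β * ((1 - β) / (2 - β) * U + 1 / (2 - β) * K)
          = (1 - β) * (2 * K - β * U) / (2 - β) := by
        field_simp
        ring
      have hnn : 0 ≤ (1 - β) * (2 * K - β * U) / (2 - β) :=
        div_nonneg (mul_nonneg (by linarith) (by linarith)) (by linarith)
      linarith

lemma O1lem (k : ℕ) (hk : Odd k) (y : ℝ) (h1 : 1 < y) (h2 : y < 2) :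
    (y - 1) + D k y ≤ (1 + (y - 1)) * D k 1 := by
  match k, hk with
  | 1, _ =>
    rw [D_gt 1 y (by exact_mod_cast h1), D_one 0, D_gt 0 2 (by norm_num)]
    linarith
  | (j'+2), hk =>
    have hj' : Odd j' := by
      rcases hk with ⟨t, ht⟩
      exact ⟨t - 1, by omega⟩
    obtain ⟨s, hs⟩ := hj'   -- j' = 2s+1, so j' = s + (s+1), j' ≥ 1
    set β : ℝ := y - 1 with hβ
    have hb0 : 0 < β := by simp [hβ]; linarith
    have hb1 : β < 1 := by simp [hβ]; linarith
    -- floor and fract of y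
    have hfl : ⌊y⌋ = (1 : ℤ) := by
      apply Int.floor_eq_iff.mpr
      constructor <;> push_cast <;> linarith
    have hfr : Int.fract y = β := by
      rw [Int.fract, hfl]; push_cast; ring
    have hni : ¬∃ m : ℤ, y = (m:ℝ) := by
      rintro ⟨m, hm⟩
      have a1 : (1:ℤ) < m := by exact_mod_cast (hm ▸ h1)
      have a2 : (m:ℤ) < 2 := by exact_mod_cast (hm ▸ h2)
      omega
    have hpar : ¬ Even (⌊y⌋ + ((j'+1:ℕ):ℤ)) := by
      rw [hfl]
      rintro ⟨t, ht⟩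
      push_cast at ht
      omega
    -- D (j'+2) y via last branch
    have hexp := D_odd_branch (j'+1) y (by linarith)
      (by push_cast; linarith [Nat.cast_nonneg (α := ℝ) j']) hni hpar
    rw [hfr, hfl] at hexp
    norm_num at hexp
    -- D (j'+1) (y-1) via linear branch; j' = 2s+1 odd... need Odd j'
    have hlin : D (j'+1) (y - 1) = (1 - (y-1)) * D j' 0 + (y-1) * D j' 1 :=
      D_lin_branch j' (y-1) (by linarith) (by linarith) ⟨s, by omega⟩
    rw [D_nonpos j' 0 le_rfl] at hlin
    -- j' = s + s + 1 ≥ 1 :  D j' 1 = 1/2 + 1/2 * D (j'-1) 2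
    have hj1 : D j' 1 = 1/2 + 1/2 * D (s+s) 2 := by
      rw [show j' = (s+s)+1 by omega]
      exact D_one (s+s)
    -- D (j'+2) 1
    have hD1 : D (j'+2) 1 = 1/2 + 1/2 * D (j'+1) 2 := D_one (j'+1)
    -- monotonicity: D (s+s) 2 ≤ D (j'+1) 2
    have hmono : D (s+s) 2 ≤ D (j'+1) 2 := by
      have m1 := D_mono (s+s) 2
      have m2 := D_mono (s+s+1) 2
      push_cast at m1 m2
      rw [show j' + 1 = s+s+1+1 by omega]
      linarith
    set Q' := D (s+s) 2
    set Q := D (j'+1) 2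
    have hQ'0 : 0 ≤ Q' := D_nonneg _ _
    have hQ0 : 0 ≤ Q := D_nonneg _ _
    have h2b : (0:ℝ) < 2 - β := by linarith
    rw [hexp, hD1, hlin, hj1]
    have heq : (1 + β) * (1/2 + 1/2 * Q)
        - (β + ((1 - β) / (2 - β) * ((1 - (y-1)) * 1 + (y-1) * (1/2 + 1/2 * Q')) + (2 - β)⁻¹ * Q))
        = β * (1 - β) * (Q - Q') / (2 * (2 - β)) := by
      rw [hβ]
      have h3a : (2:ℝ) - (y - 1) ≠ 0 := by linarith
      have h3b : (3:ℝ) - y ≠ 0 := by linarith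
      field_simp
      ring
    have hnn : 0 ≤ β * (1 - β) * (Q - Q') / (2 * (2 - β)) := by
      apply div_nonneg _ (by linarith)
      apply mul_nonneg (mul_nonneg (by linarith) (by linarith)) (by linarith)
    linarith

lemma Olem (n : ℕ) : ∀ y : ℝ, 1 < y → (¬∃ m : ℤ, y = (m:ℝ)) → Odd (⌊y⌋ + (n:ℤ)) →
    Int.fract y * D n (y-1) + (2 - Int.fract y) * D n (y+1) ≤ 2 * D n ((⌊y⌋:ℝ)+1) := by
  induction n with
  | zero =>
    intro y h1 hni hodd
    have hp1 : (1:ℤ) ≤ ⌊y⌋ := Int.le_floor.mpr (by exact_mod_cast h1.le)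
    have hb0 := Int.fract_nonneg y
    have hb1 := Int.fract_lt_one y
    rw [D_gt 0 (y-1) (by push_cast; linarith),
      D_gt 0 (y+1) (by push_cast; linarith),
      D_gt 0 ((⌊y⌋:ℝ)+1) (by push_cast; exact_mod_cast by exact_mod_cast
        (show (0:ℝ) < (⌊y⌋:ℝ)+1 by exact_mod_cast by push_cast; linarith [show (1:ℝ) ≤ (⌊y⌋:ℝ) from by exact_mod_cast hp1]))]
    linarith
  | succ k ih =>
    intro y h1 hni hodd
    have hp1 : (1:ℤ) ≤ ⌊y⌋ := Int.le_floor.mpr (by exact_mod_cast h1.le)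
    have hp1R : (1:ℝ) ≤ (⌊y⌋:ℝ) := by exact_mod_cast hp1
    set β := Int.fract y with hβdef
    have hb0 : 0 < β := noninteger_fract_pos hni
    have hb1 : β < 1 := Int.fract_lt_one y
    have hyq : y = (⌊y⌋:ℝ) + β := by rw [hβdef]; exact (Int.floor_add_fract y).symm
    have hylt : y < (⌊y⌋:ℝ) + 1 := by linarith
    have hygt : (⌊y⌋:ℝ) < y := by linarith
    have hEe : Even (⌊y⌋ + (k:ℤ)) := by
      rcases hodd with ⟨t, ht⟩
      push_cast at ht
      exact ⟨t, by omega⟩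
    by_cases hA : (k:ℤ) + 2 ≤ ⌊y⌋
    · -- everything vanishes
      have hAR : (k:ℝ) + 2 ≤ (⌊y⌋:ℝ) := by exact_mod_cast hA
      rw [D_gt (k+1) (y-1) (by push_cast; linarith),
        D_gt (k+1) (y+1) (by push_cast; linarith),
        D_gt (k+1) ((⌊y⌋:ℝ)+1) (by push_cast; linarith)]
      linarith
    · push_neg at hA
      have hne : ⌊y⌋ ≠ (k:ℤ) + 1 := by
        intro h
        rcases hEe with ⟨t, ht⟩
        omega
      have hple : ⌊y⌋ ≤ (k:ℤ) := by omega
      by_cases hB : ⌊y⌋ = (k:ℤ)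
      · -- p = k
        have hkR : (⌊y⌋:ℝ) = (k:ℝ) := by exact_mod_cast hB
        have hc0 : D (k+1) (y+1) = 0 :=
          D_gt (k+1) (y+1) (by push_cast; linarith)
        have hbint : D (k+1) ((⌊y⌋:ℝ)+1) = 1/2 * D k (k:ℝ) := by
          have h := D_int k (⌊y⌋+1) (by omega) (by push_cast; linarith)
          push_cast at h
          rw [show (⌊y⌋:ℝ)+1-1 = (k:ℝ) by rw [hkR]; ring,
            show (⌊y⌋:ℝ)+1+1 = (k:ℝ)+2 by rw [hkR]; ring] at h
          rw [h, D_gt k ((k:ℝ)+2) (by linarith)]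
          ring
        have hk1 : 1 ≤ k := by
          have : (1:ℤ) ≤ (k:ℤ) := by omega
          exact_mod_cast this
        rw [hbint, hc0]
        by_cases hk2 : 2 ≤ k
        · -- use Zlem
          have haexp := D_odd_branch k (y-1)
            (by have : (2:ℝ) ≤ (k:ℝ) := by exact_mod_cast hk2
                linarith [hygt, hkR ▸ hygt])
            (by push_cast; linarith)
            (noninteger_sub_one hni)
            (by rw [Int.floor_sub_one]
                rintro ⟨t, ht⟩
                rw [hB] at ht
                omega)
          rw [Int.fract_sub_one, ← hβdef, Int.floor_sub_one] at haexp
          rw [show ((⌊y⌋ - 1 : ℤ):ℝ) + 1 = (k:ℝ) by push_cast; rw [hkR]; ring,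
            show y - 1 - 1 = (k:ℝ) - 2 + β by rw [hyq, hkR]; ring] at haexp
          have hZ := Zlem k β hb0 hb1
          set U := D k ((k:ℝ) - 2 + β)
          set K := D k (k:ℝ)
          have hU0 : 0 ≤ U := D_nonneg _ _
          have hK0 : 0 ≤ K := D_nonneg _ _
          have h2b : (0:ℝ) < 2 - β := by linarith
          rw [haexp]
          have heq : 2 * (1/2 * K) - (β * ((1 - β) / (2 - β) * U + 1 / (2 - β) * K) + (2 - β) * 0)
              = (1 - β) * (2 * K - β * U) / (2 - β) := by
            field_simp; ring
          have hnn : 0 ≤ (1 - β) * (2 * K - β * U) / (2 - β) :=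
            div_nonneg (mul_nonneg (by linarith) (by linarith)) (by linarith)
          linarith
        · -- k = 1
          have hk1' : k = 1 := by omega
          subst hk1'
          have hfl1 : ⌊y⌋ = (1:ℤ) := hB
          have haexp : D 2 (y-1) = (1 - (y-1)) * D 1 0 + (y-1) * D 1 1 :=
            D_lin_branch 1 (y-1) (by linarith) (by rw [hfl1] at hylt; push_cast at hylt; linarith)
              ⟨0, by norm_num⟩
          have hβy : β = y - 1 := by
            rw [hβdef, Int.fract, hfl1]; push_cast; ring
          rw [haexp, D_nonpos 1 0 le_rfl, D_one 0, D_gt 0 2 (by norm_num)]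
          have hD11 : D 1 (((1:ℕ)):ℝ) = 1/2 := by
            push_cast
            rw [D_one 0, D_gt 0 2 (by norm_num)]
            ring
          rw [hD11, hβy]
          nlinarith [sq_nonneg (2 - y)]
      · -- p ≤ k - 1
        have hC : ⌊y⌋ ≤ (k:ℤ) - 1 := by omega
        have hCR : (⌊y⌋:ℝ) ≤ (k:ℝ) - 1 := by exact_mod_cast hC
        have hbint : D (k+1) ((⌊y⌋:ℝ)+1) = 1/2 * D k (⌊y⌋:ℝ) + 1/2 * D k ((⌊y⌋:ℝ)+2) := by
          have h := D_int k (⌊y⌋+1) (by omega) (by push_cast; linarith)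
          push_cast at h
          rw [show (⌊y⌋:ℝ)+1-1 = (⌊y⌋:ℝ) by ring, show (⌊y⌋:ℝ)+1+1 = (⌊y⌋:ℝ)+2 by ring] at h
          exact h
        have hcexp := D_odd_branch k (y+1) (by linarith)
          (by push_cast; linarith)
          (noninteger_add_one hni)
          (by rw [Int.floor_add_one]
              rintro ⟨t, ht⟩
              rcases hEe with ⟨u, hu⟩
              omega)
        rw [Int.fract_add_one, ← hβdef, Int.floor_add_one] at hcexp
        rw [show ((⌊y⌋ + 1 : ℤ):ℝ) + 1 = (⌊y⌋:ℝ) + 2 by push_cast; ring,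
          show y + 1 - 1 = y by ring] at hcexp
        rw [hbint, hcexp]
        have h2b : (0:ℝ) < 2 - β := by linarith
        by_cases hp2 : (2:ℤ) ≤ ⌊y⌋
        · -- generic: use IH at y - 1
          have hp2R : (2:ℝ) ≤ (⌊y⌋:ℝ) := by exact_mod_cast hp2
          have haexp := D_odd_branch k (y-1) (by linarith)
            (by push_cast; linarith)
            (noninteger_sub_one hni)
            (by rw [Int.floor_sub_one]
                rintro ⟨t, ht⟩
                rcases hEe with ⟨u, hu⟩
                omega)
          rw [Int.fract_sub_one, ← hβdef, Int.floor_sub_one] at haexp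
          rw [show ((⌊y⌋ - 1 : ℤ):ℝ) + 1 = (⌊y⌋:ℝ) by push_cast; ring] at haexp
          have hIH := ih (y-1) (by linarith) (noninteger_sub_one hni)
            (by rw [Int.floor_sub_one]
                rcases hEe with ⟨u, hu⟩
                exact ⟨u - 1, by omega⟩)
          rw [Int.fract_sub_one, ← hβdef, Int.floor_sub_one] at hIH
          rw [show y - 1 + 1 = y by ring,
            show ((⌊y⌋ - 1 : ℤ):ℝ) + 1 = (⌊y⌋:ℝ) by push_cast; ring] at hIH
          rw [haexp]
          set U := D k (y-1-1)
          set P := D k ((⌊y⌋:ℝ))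
          set V := D k y
          set R := D k ((⌊y⌋:ℝ)+2)
          have heq : 2 * (1/2 * P + 1/2 * R)
              - (β * ((1 - β) / (2 - β) * U + 1 / (2 - β) * P)
                 + (2 - β) * ((1 - β) / (2 - β) * V + 1 / (2 - β) * R))
              = (1 - β) / (2 - β) * (2 * P - (β * U + (2 - β) * V)) := by
            field_simp; ring
          have hnn : 0 ≤ (1 - β) / (2 - β) * (2 * P - (β * U + (2 - β) * V)) := by
            apply mul_nonneg (div_nonneg (by linarith) (by linarith))
            linarith [hIH]
          linarith
        · -- p = 1 : use O1lem
          have hfl1 : ⌊y⌋ = (1:ℤ) := by omega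
          have hβy : β = y - 1 := by
            rw [hβdef, Int.fract, hfl1]; push_cast; ring
          have hy2 : y < 2 := by
            rw [hfl1] at hylt; push_cast at hylt; linarith
          have hkodd : Odd k := by
            rcases hEe with ⟨u, hu⟩
            rw [hfl1] at hu
            have : (k:ℤ) = 2*(u-1) + 1 := by omega
            have hzk : Odd (k:ℤ) := ⟨u-1, by omega⟩
            exact Int.odd_coe_nat k |>.mp hzk
          have haexp : D (k+1) (y-1) = (1 - (y-1)) * D k 0 + (y-1) * D k 1 :=
            D_lin_branch k (y-1) (by linarith) (by linarith) hkodd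
          have hO1 := O1lem k hkodd y h1 hy2
          rw [haexp, D_nonpos k 0 le_rfl]
          rw [show ((⌊y⌋:ℝ)) = (1:ℝ) by rw [hfl1]; norm_num]
          set P1 := D k 1
          set P3 := D k ((1:ℝ)+2)
          set V := D k y
          have hsimp : (2 - β) * ((1 - β) / (2 - β) * V + 1 / (2 - β) * P3)
              = (1 - β) * V + P3 := by
            field_simp
          rw [hsimp, hβy]
          nlinarith [mul_nonneg (show (0:ℝ) ≤ 1 - β by linarith)
            (show (0:ℝ) ≤ (1 + (y-1)) * P1 - ((y-1) + V) by linarith [hO1])]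

/-- part (c) of Lemma 3.3. -/
theorem D_ineq_c (n : ℕ) (x : ℝ) (hx1 : 1 < x) (hint : ¬∃ m : ℤ, x = (m : ℝ))
    (hodd : Odd (⌊x⌋ + (n : ℤ))) :
    ((1 - Int.fract x) / (2 - Int.fract x)) * D n (x - 1)
      + (1 / (2 - Int.fract x)) * D n ((⌊x⌋ : ℝ) + 1)
      - (1 / 2) * D n (x - 1) - (1 / 2) * D n (x + 1) ≥ 0 := by
  have key := Olem n x hx1 hint hodd
  set β := Int.fract x with hβ
  have hb0 : 0 < β := noninteger_fract_pos hint
  have hb1 : β < 1 := Int.fract_lt_one x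
  set a := D n (x-1)
  set b := D n ((⌊x⌋:ℝ)+1)
  set c := D n (x+1)
  have h2b : (0:ℝ) < 2 - β := by linarith
  have heq : (1 - β)/(2 - β) * a + 1/(2-β) * b - 1/2 * a - 1/2 * c
      = (2*b - (β*a + (2-β)*c)) / (2*(2-β)) := by
    field_simp; ring
  rw [ge_iff_le, heq]
  apply div_nonneg _ (by linarith)
  linarith [key]
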